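/- Let A be a finite abelian p-group which is cyclic as a ℤ_p[T]-module (for some nilpotent-acting T) with p-rank n. Then there exists a polynomial g(T) = T^n − p·h(T) ∈ ℤ_p[T], with deg(h) < n, that annihilates A. -/

import Mathlib

open Polynomial
lemma aux_mul_apply {A : Type*} [AddCommGroup A] (T : AddMonoid.End A) (f g : ℤ[X]) (x : A) :
    aeval T (f * g) x = aeval T f (aeval T g x) := by rw [map_mul]; rfl

lemma aux_C_mul {A : Type*} [AddCommGroup A] (T : AddMonoid.End A) (c : ℤ) (f : ℤ[X]) (x : A) :
    aeval T (C c * f) x = c • (aeval T f x) := by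
  rw [map_mul, aeval_C]; simp [Algebra.algebraMap_eq_smul_one]

/-- A finite abelian `p`-group `A` which is a cyclic `ℤ_p[T]`-module (with
nilpotent `T`-action) of `p`-rank `n` is annihilated by a polynomial of the form
`g(T) = T^n − p·h(T)` with `deg h < n`. -/
theorem stmt_9 (p : ℕ) (hp : p.Prime) (A : Type*) [AddCommGroup A] [Fintype A]
    (hpA : ∀ x : A, ∃ k : ℕ, p ^ k • x = 0)
    (T : AddMonoid.End A) (hnil : ∃ M : ℕ, T ^ M = 0)
    (a : A) (hcyc : ∀ x : A, ∃ f : Polynomial ℤ, x = Polynomial.aeval T f a)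
    (n : ℕ) (hrank : Nat.card (A ⧸ (p • AddMonoidHom.id A).range) = p ^ n) :
    ∃ h : Polynomial ℤ, h.degree < (n : WithBot ℕ) ∧
      ∀ x : A, (T ^ n) x = Polynomial.aeval T ((p : Polynomial ℤ) * h) x := by
  classical
  set P : AddSubgroup A := (p • AddMonoidHom.id A).range with hPdef
  have hPmem : ∀ x : A, p • x ∈ P := fun x => ⟨x, by simp⟩
  have hPz : ∀ x : A, (p : ℤ) • x ∈ P := fun x => by
    rw [natCast_zsmul]; exact hPmem x
  have hTP : ∀ x ∈ P, T x ∈ P := by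
    rintro x ⟨y, rfl⟩
    exact ⟨T y, by simp⟩
  have hTjP : ∀ (j : ℕ), ∀ x ∈ P, (T ^ j) x ∈ P := by
    intro j
    induction j with
    | zero => intro x hx; simpa using hx
    | succ j ih =>
      intro x hx
      rw [pow_succ]
      exact ih _ (hTP x hx)
  obtain ⟨e, he⟩ : ∃ e : ℕ, ∀ x : A, p ^ e • x = 0 := by
    refine ⟨Finset.univ.sup (fun x : A => (hpA x).choose), fun x => ?_⟩
    have hk : (hpA x).choose ≤ Finset.univ.sup (fun x : A => (hpA x).choose) :=
      Finset.le_sup (f := fun x : A => (hpA x).choose) (Finset.mem_univ x)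
    rw [← Nat.sub_add_cancel hk, pow_add, mul_smul, (hpA x).choose_spec, smul_zero]
  have hex : ∃ k : ℕ, (T ^ k) a ∈ P := by
    obtain ⟨M, hM⟩ := hnil
    exact ⟨M, by rw [hM]; simpa using P.zero_mem⟩
  set d := Nat.find hex with hd
  have hdP : (T ^ d) a ∈ P := Nat.find_spec hex
  have hdmin : ∀ k < d, (T ^ k) a ∉ P := fun k hk => Nat.find_min hex hk
  have hge : ∀ m, d ≤ m → (T ^ m) a ∈ P := by
    intro m hm
    rw [← Nat.sub_add_cancel hm, pow_add]
    exact hTjP _ _ hdP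
  have hinj : Function.Injective (fun c : Fin d → Fin p =>
      (QuotientAddGroup.mk (∑ k ∈ Finset.range d,
        (if h : k < d then ((c ⟨k, h⟩ : ℕ) : ℤ) else 0) • (T ^ k) a) : A ⧸ P)) := by
    intro c c' hcc
    by_contra hne
    set g : ℕ → ℤ := fun k =>
      if h : k < d then ((c ⟨k, h⟩ : ℕ) : ℤ) - ((c' ⟨k, h⟩ : ℕ) : ℤ) else 0 with hg
    have hsum : (∑ k ∈ Finset.range d, g k • (T ^ k) a) ∈ P := by
      have h1 := QuotientAddGroup.eq_iff_sub_mem.mp hcc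
      have h2 : (∑ k ∈ Finset.range d, (if h : k < d then ((c ⟨k, h⟩ : ℕ) : ℤ) else 0) • (T ^ k) a)
          - (∑ k ∈ Finset.range d, (if h : k < d then ((c' ⟨k, h⟩ : ℕ) : ℤ) else 0) • (T ^ k) a)
          = ∑ k ∈ Finset.range d, g k • (T ^ k) a := by
        rw [← Finset.sum_sub_distrib]
        refine Finset.sum_congr rfl fun k hk => ?_
        have hkd : k < d := Finset.mem_range.mp hk
        rw [hg]
        simp only [dif_pos hkd, ← sub_smul]
      rw [h2] at h1
      exact h1
    have hne' : ∃ k, g k ≠ 0 := by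
      by_contra hall
      push_neg at hall
      apply hne
      funext k
      have h3 := hall k.val
      rw [hg] at h3
      simp only [dif_pos k.isLt, Fin.eta, sub_eq_zero] at h3
      exact Fin.ext (by exact_mod_cast h3)
    set j := Nat.find hne' with hj
    have hgj : g j ≠ 0 := Nat.find_spec hne'
    have hjlt : j < d := by
      by_contra hjd
      exact hgj (by rw [hg]; exact dif_neg hjd)
    have hjmin : ∀ k < j, g k = 0 := fun k hk => not_not.mp (Nat.find_min hne' hk)
    have h2 : (∑ k ∈ Finset.range d, g k • (T ^ (d - 1 - j + k)) a) ∈ P := by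
      have h3 := hTjP (d - 1 - j) _ hsum
      rw [map_sum] at h3
      have h4 : ∀ k ∈ Finset.range d,
          (T ^ (d - 1 - j)) (g k • (T ^ k) a) = g k • (T ^ (d - 1 - j + k)) a := by
        intro k _
        rw [map_zsmul, pow_add]
        rfl
      rwa [Finset.sum_congr rfl h4] at h3
    rw [Finset.range_eq_Ico,
      ← Finset.sum_Ico_consecutive _ (Nat.zero_le j) (le_of_lt hjlt)] at h2
    have hlow : (∑ k ∈ Finset.Ico 0 j, g k • (T ^ (d - 1 - j + k)) a) = 0 :=
      Finset.sum_eq_zero fun k hk => by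
        rw [hjmin k (Finset.mem_Ico.mp hk).2, zero_smul]
    rw [hlow, zero_add, Finset.sum_eq_sum_Ico_succ_bot hjlt] at h2
    have hhigh : (∑ k ∈ Finset.Ico (j + 1) d, g k • (T ^ (d - 1 - j + k)) a) ∈ P :=
      AddSubgroup.sum_mem _ fun k hk => by
        obtain ⟨hk1, hk2⟩ := Finset.mem_Ico.mp hk
        exact AddSubgroup.zsmul_mem _ (hge _ (by omega)) _
    have hmain : g j • (T ^ (d - 1)) a ∈ P := by
      have h5 := P.sub_mem h2 hhigh
      rw [add_sub_cancel_right] at h5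
      have hexp : d - 1 - j + j = d - 1 := by omega
      rwa [hexp] at h5
    have hpd : ¬ ((p : ℤ) ∣ g j) := by
      intro hdvd
      apply hgj
      refine Int.eq_zero_of_abs_lt_dvd hdvd ?_
      have h5 : g j = ((c ⟨j, hjlt⟩ : ℕ) : ℤ) - ((c' ⟨j, hjlt⟩ : ℕ) : ℤ) := by
        rw [hg]; exact dif_pos hjlt
      have hc1 := (c ⟨j, hjlt⟩).isLt
      have hc2 := (c' ⟨j, hjlt⟩).isLt
      rw [h5, abs_lt]
      constructor <;> omega
    obtain ⟨u, v, huv⟩ :=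
      ((Int.prime_iff_natAbs_prime.mpr (by simpa using hp)).coprime_iff_not_dvd.mpr hpd)
    refine hdmin (d - 1) (by omega) ?_
    have h6 : (T ^ (d - 1)) a = (u * p) • (T ^ (d - 1)) a + (v * g j) • (T ^ (d - 1)) a := by
      rw [← add_smul, huv, one_smul]
    rw [h6]
    exact P.add_mem
      (by rw [mul_smul]; exact AddSubgroup.zsmul_mem _ (hPz _) _)
      (by rw [mul_smul]; exact AddSubgroup.zsmul_mem _ hmain _)
  have hdn : d ≤ n := by
    have h1 := Nat.card_le_card_of_injective _ hinj
    rw [hrank] at h1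
    have h2 : Nat.card (Fin d → Fin p) = p ^ d := by
      simp [Nat.card_eq_fintype_card]
    rw [h2] at h1
    exact (Nat.pow_le_pow_iff_right hp.one_lt).mp h1
  have hTn : (T ^ n) a ∈ P := hge n hdn
  obtain ⟨b0, hb0⟩ : ∃ b0, (T ^ n) a = p • b0 := by
    obtain ⟨y, hy⟩ := hTn
    exact ⟨y, by simp [← hy]⟩
  have key : ∀ m : ℕ, ∀ x : A, ∃ h : ℤ[X], h.degree < (n : WithBot ℕ) ∧
      ∃ y, x = aeval T h a + p ^ m • y := by
    intro m
    induction m with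
    | zero =>
      intro x
      exact ⟨0, by rw [degree_zero]; exact WithBot.bot_lt_coe n, x, by simp⟩
    | succ m ih =>
      intro x
      obtain ⟨h1, hh1, y, hy⟩ := ih x
      obtain ⟨f, hf⟩ := hcyc y
      have hmon : (X ^ n : ℤ[X]).Monic := monic_X_pow n
      set q := f /ₘ (X ^ n : ℤ[X]) with hq
      set r := f %ₘ (X ^ n : ℤ[X]) with hr
      have hfeq : r + X ^ n * q = f := modByMonic_add_div f (X ^ n)
      have hXq : aeval T (X ^ n * q) a = p • aeval T q b0 := by
        rw [mul_comm, aux_mul_apply, aeval_X_pow, hb0, map_nsmul]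
      have hyeq : y = aeval T r a + p • aeval T q b0 := by
        rw [hf, ← hfeq, map_add]
        rw [(show ∀ (f g : AddMonoid.End A) (x : A), (f + g) x = f x + g x from fun _ _ _ => rfl), hXq]
      refine ⟨h1 + C ((p : ℤ) ^ m) * r, ?_, aeval T q b0, ?_⟩
      · refine lt_of_le_of_lt (degree_add_le _ _) (max_lt hh1 ?_)
        have hCr : (C ((p : ℤ) ^ m) * r).degree ≤ r.degree := by
          rw [← smul_eq_C_mul]
          exact degree_smul_le _ _
        refine lt_of_le_of_lt hCr ?_
        exact lt_of_lt_of_le (degree_modByMonic_lt f hmon) (le_of_eq (degree_X_pow n))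
      · rw [hy, hyeq, map_add, (show ∀ (f g : AddMonoid.End A) (x : A), (f + g) x = f x + g x from fun _ _ _ => rfl), aux_C_mul]
        rw [smul_add, smul_smul, ← pow_succ]
        have hcast : ((p : ℤ) ^ m) • aeval T r a = p ^ m • aeval T r a := by
          rw [← Nat.cast_pow, natCast_zsmul]
        rw [hcast]
        abel
  obtain ⟨h, hh, y, hbeq⟩ := key e b0
  rw [he y, add_zero] at hbeq
  refine ⟨h, hh, fun x => ?_⟩
  obtain ⟨g', hg'⟩ := hcyc x
  have hTna : (T ^ n) a = aeval T ((p : ℤ[X]) * h) a := by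
    rw [hb0, hbeq, map_mul, aeval_natCast]
    exact (AddMonoid.End.natCast_apply p _).symm
  rw [hg']
  calc (T ^ n) (aeval T g' a) = aeval T (X ^ n * g') a := by
        rw [aux_mul_apply, aeval_X_pow]
    _ = aeval T g' ((T ^ n) a) := by rw [mul_comm, aux_mul_apply, aeval_X_pow]
    _ = aeval T (g' * ((p : ℤ[X]) * h)) a := by rw [hTna, ← aux_mul_apply]
    _ = aeval T ((p : ℤ[X]) * h) (aeval T g' a) := by rw [mul_comm, aux_mul_apply]
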